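/- arXiv:2102.09352 — 2 statements merged into one kernel-verified Lean document; each statement's English description precedes it below -/
import Mathlib

section
/- Let f ∈ Diff¹_ω(D), let u : ℝ² → ℝ be a C¹ function, and set λ' = λ + du. Let A, A' : D → ℝ be C¹ functions with dA = f*λ − λ and dA' = f*λ' − λ' on D, and let μ be an f|_{S¹}-invariant Borel probability measure on S¹ such that ∫_{S¹} A dμ = ∫_{S¹} A' dμ = 0. Then ∫_D A dLeb = ∫_D A' dLeb. -/
open MeasureTheory Metric Set Filter Topology
open scoped Real

noncomputable section

/-- The closed unit disk in `ℂ ≅ ℝ²`. -/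
def Disk : Set ℂ := Metric.closedBall 0 1

/-- The unit circle, boundary of the closed unit disk. -/
def Circ : Set ℂ := Metric.sphere 0 1

/-- The standard Liouville form `λ_z(w) = (z₁ w₂ - z₂ w₁)/(2π)`, whose exterior
derivative is the normalized area form `ω = (1/π) du ∧ dv`. -/
def lform (z w : ℂ) : ℝ := (z.re * w.im - z.im * w.re) / (2 * Real.pi)

/-- An element of `Diff¹_ω(D)`: a `C¹` diffeomorphism of the closed unit disk onto itself
whose Jacobian determinant equals `1` at every point. -/
structure SympDiff where
  toFun : ℂ → ℂ
  invFun : ℂ → ℂ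
  mapsTo : Set.MapsTo toFun Disk Disk
  inv_mapsTo : Set.MapsTo invFun Disk Disk
  left_inv : ∀ z ∈ Disk, invFun (toFun z) = z
  right_inv : ∀ z ∈ Disk, toFun (invFun z) = z
  contDiffOn : ContDiffOn ℝ 1 toFun Disk
  inv_contDiffOn : ContDiffOn ℝ 1 invFun Disk
  jacobian : ∀ z ∈ Disk,
    LinearMap.det (fderivWithin ℝ toFun Disk z).toLinearMap = 1

/-- `A` is an action function of `f`: a `C¹` function with `dA = f*λ - λ` on the disk. -/
def IsAction (f : SympDiff) (A : ℂ → ℝ) : Prop :=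
  ContDiffOn ℝ 1 A Disk ∧
    ∀ z ∈ Disk, ∀ w : ℂ,
      fderivWithin ℝ A Disk z w =
        lform (f.toFun z) (fderivWithin ℝ f.toFun Disk z w) - lform z w

/-- `μ` is a Borel probability measure concentrated on the unit circle and invariant
under `f|_{S¹}`. -/
def IsInvariantCircleMeasure (f : SympDiff) (μ : Measure ℂ) : Prop :=
  IsProbabilityMeasure μ ∧ μ Circᶜ = 0 ∧ Measure.map f.toFun μ = μ

/-- `A` is a normalized action function of `f`: an action function whose integral over the
circle with respect to some `f|_{S¹}`-invariant probability measure vanishes. -/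
def IsNormalizedAction (f : SympDiff) (A : ℂ → ℝ) : Prop :=
  IsAction f A ∧
    ∃ μ : Measure ℂ, IsInvariantCircleMeasure f μ ∧ ∫ z, A z ∂μ = 0

/-- The `C⁰` distance between two disk diffeomorphisms (given with their inverses). -/
def d0 (f fi g gi : ℂ → ℂ) : ℝ :=
  max (⨆ z : Disk, ‖f (z : ℂ) - g (z : ℂ)‖) (⨆ z : Disk, ‖fi (z : ℂ) - gi (z : ℂ)‖)

/-- The `C¹` distance between two disk diffeomorphisms (given with their inverses). -/
def d1 (f fi g gi : ℂ → ℂ) : ℝ :=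
  max (d0 f fi g gi)
    (max (⨆ z : Disk, ‖fderivWithin ℝ f Disk (z : ℂ) - fderivWithin ℝ g Disk (z : ℂ)‖)
      (⨆ z : Disk, ‖fderivWithin ℝ fi Disk (z : ℂ) - fderivWithin ℝ gi Disk (z : ℂ)‖))

lemma disk_compact : IsCompact Disk := isCompact_closedBall 0 1
lemma disk_meas : MeasurableSet Disk := measurableSet_closedBall
lemma disk_convex : Convex ℝ Disk := convex_closedBall 0 1
lemma circ_subset_disk : Circ ⊆ Disk := sphere_subset_closedBall
lemma disk_uniqueDiff : UniqueDiffOn ℝ Disk :=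
  uniqueDiffOn_convex disk_convex (by
    rw [show Disk = Metric.closedBall (0:ℂ) 1 from rfl, interior_closedBall (0:ℂ) one_ne_zero]
    exact ⟨0, mem_ball_self one_pos⟩)
lemma one_mem_disk : (1 : ℂ) ∈ Disk := by
  simp [Disk, mem_closedBall, dist_eq_norm]

lemma integrable_of_contOn {X : ℂ → ℝ} (hX : ContinuousOn X Disk) {μ : Measure ℂ}
    [IsProbabilityMeasure μ] (h0 : μ Diskᶜ = 0) : Integrable X μ := by
  have hres : μ.restrict Disk = μ := by
    apply Measure.restrict_eq_self_of_ae_mem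
    rw [← compl_compl Disk] at h0 ⊢
    exact (ae_iff.2 (by simp only [compl_compl] at h0 ⊢; exact h0))
  obtain ⟨C, hC⟩ := disk_compact.exists_bound_of_continuousOn hX
  refine ⟨?_, HasFiniteIntegral.of_bounded (C := C) ?_⟩
  · have := (hX.aemeasurable disk_meas : AEMeasurable X (μ.restrict Disk))
    rw [hres] at this
    exact this.aestronglyMeasurable
  · have hae : ∀ᵐ z ∂μ, z ∈ Disk := by
      rw [ae_iff]; exact h0
    filter_upwards [hae] with z hz using hC z hz

/-- The Calabi invariant does not depend on the choice of the
Liouville form `λ' = λ + du`. -/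
theorem cal_indep_liouville (f : SympDiff) (u : ℂ → ℝ) (hu : ContDiff ℝ 1 u)
    (A A' : ℂ → ℝ)
    (hA : IsAction f A)
    (hA'smooth : ContDiffOn ℝ 1 A' Disk)
    (hA' : ∀ z ∈ Disk, ∀ w : ℂ,
      fderivWithin ℝ A' Disk z w =
        (lform (f.toFun z) (fderivWithin ℝ f.toFun Disk z w) +
          fderiv ℝ u (f.toFun z) (fderivWithin ℝ f.toFun Disk z w)) -
        (lform z w + fderiv ℝ u z w))
    (μ : Measure ℂ) (hμ : IsInvariantCircleMeasure f μ)
    (hAμ : ∫ z, A z ∂μ = 0) (hA'μ : ∫ z, A' z ∂μ = 0) :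
    ∫ z in Disk, A z = ∫ z in Disk, A' z := by
  obtain ⟨hμprob, hμcirc, hμinv⟩ := hμ
  have hud : Differentiable ℝ u := hu.differentiable one_ne_zero
  have hfd : DifferentiableOn ℝ f.toFun Disk := f.contDiffOn.differentiableOn one_ne_zero
  have hfc : ContinuousOn f.toFun Disk := f.contDiffOn.continuousOn
  have hufc : ContinuousOn (fun z => u (f.toFun z)) Disk :=
    hu.continuous.comp_continuousOn hfc
  set g : ℂ → ℝ := fun z => (A' z - A z) - (u (f.toFun z) - u z) with hg_def
  -- g has zero derivative within the disk
  have hgderiv : ∀ z ∈ Disk, HasFDerivWithinAt g (0 : ℂ →L[ℝ] ℝ) Disk z := by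
    intro z hz
    have hA'f : HasFDerivWithinAt A' (fderivWithin ℝ A' Disk z) Disk z :=
      ((hA'smooth.differentiableOn one_ne_zero) z hz).hasFDerivWithinAt
    have hAf : HasFDerivWithinAt A (fderivWithin ℝ A Disk z) Disk z :=
      ((hA.1.differentiableOn one_ne_zero) z hz).hasFDerivWithinAt
    have hfz : HasFDerivWithinAt f.toFun (fderivWithin ℝ f.toFun Disk z) Disk z :=
      (hfd z hz).hasFDerivWithinAt
    have huf : HasFDerivWithinAt (fun z => u (f.toFun z))
        ((fderiv ℝ u (f.toFun z)).comp (fderivWithin ℝ f.toFun Disk z)) Disk z :=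
      (hud (f.toFun z)).hasFDerivAt.comp_hasFDerivWithinAt z hfz
    have huz : HasFDerivWithinAt u (fderiv ℝ u z) Disk z :=
      (hud z).hasFDerivAt.hasFDerivWithinAt
    have hT : ((fderivWithin ℝ A' Disk z - fderivWithin ℝ A Disk z) -
        ((fderiv ℝ u (f.toFun z)).comp (fderivWithin ℝ f.toFun Disk z) - fderiv ℝ u z))
        = (0 : ℂ →L[ℝ] ℝ) := by
      ext w
      simp only [ContinuousLinearMap.sub_apply, ContinuousLinearMap.comp_apply,
        ContinuousLinearMap.zero_apply, hA.2 z hz w, hA' z hz w]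
      ring
    have := ((hA'f.sub hAf).sub (huf.sub huz))
    rwa [hT] at this
  -- g is constant on the disk
  have hconst : ∀ z ∈ Disk, g z = g 1 := by
    intro z hz
    have := Convex.norm_image_sub_le_of_norm_hasFDerivWithin_le
      (f' := fun _ => (0 : ℂ →L[ℝ] ℝ)) (C := 0) hgderiv
      (fun x _ => by simp) disk_convex one_mem_disk hz
    simp only [zero_mul, norm_le_zero_iff, sub_eq_zero] at this
    exact this
  set c : ℝ := g 1 with hc_def
  -- μ-a.e. membership in the disk
  have hμdisk : μ Diskᶜ = 0 :=
    measure_mono_null (compl_subset_compl.2 circ_subset_disk) hμcirc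
  have hae : ∀ᵐ z ∂μ, z ∈ Disk := by rw [ae_iff]; exact hμdisk
  -- integral of u ∘ f against μ equals integral of u
  have hfaem : AEMeasurable f.toFun μ := by
    have hres : μ.restrict Disk = μ := by
      apply Measure.restrict_eq_self_of_ae_mem
      exact hae
    have := (hfc.aemeasurable disk_meas : AEMeasurable f.toFun (μ.restrict Disk))
    rwa [hres] at this
  have hufμ : ∫ z, u (f.toFun z) ∂μ = ∫ z, u z ∂μ := by
    conv_rhs => rw [← hμinv]
    rw [integral_map hfaem hu.continuous.aestronglyMeasurable]
  -- integrabilities w.r.t. μ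
  have hintA : Integrable A μ := integrable_of_contOn (hA.1.continuousOn) hμdisk
  have hintA' : Integrable A' μ := integrable_of_contOn (hA'smooth.continuousOn) hμdisk
  have hintuf : Integrable (fun z => u (f.toFun z)) μ := integrable_of_contOn hufc hμdisk
  have hintu : Integrable u μ := integrable_of_contOn (hu.continuous.continuousOn) hμdisk
  -- c = 0
  have hgμ : ∫ z, g z ∂μ = c := by
    have : g =ᵐ[μ] fun _ => c := by
      filter_upwards [hae] with z hz using hconst z hz
    rw [integral_congr_ae this, integral_const]
    simp
  have hgμ' : ∫ z, g z ∂μ = 0 := by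
    rw [hg_def]
    have h := integral_sub (hintA'.sub hintA) (hintuf.sub hintu)
    simp only [Pi.sub_apply] at h
    rw [h, integral_sub hintA' hintA, integral_sub hintuf hintu, hAμ, hA'μ, hufμ]
    ring
  have hc0 : c = 0 := by rw [← hgμ, hgμ']
  -- change of variables on the disk
  have himg : f.toFun '' Disk = Disk := by
    apply subset_antisymm f.mapsTo.image_subset
    intro z hz
    exact ⟨f.invFun z, f.inv_mapsTo hz, f.right_inv z hz⟩
  have hinj : InjOn f.toFun Disk := fun a ha b hb h => by
    rw [← f.left_inv a ha, ← f.left_inv b hb, h]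
  have hcov := integral_image_eq_integral_abs_det_fderiv_smul volume disk_meas
    (fun x hx => (hfd x hx).hasFDerivWithinAt) hinj u
  rw [himg] at hcov
  have hufD : ∫ z in Disk, u (f.toFun z) = ∫ z in Disk, u z := by
    rw [hcov]
    apply setIntegral_congr_fun disk_meas
    intro x hx
    have : (fderivWithin ℝ f.toFun Disk x).det = 1 := f.jacobian x hx
    simp [this]
  -- integrabilities on the disk w.r.t. volume
  have hIA : IntegrableOn A Disk := (hA.1.continuousOn).integrableOn_compact disk_compact
  have hIA' : IntegrableOn A' Disk := (hA'smooth.continuousOn).integrableOn_compact disk_compact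
  have hIuf : IntegrableOn (fun z => u (f.toFun z)) Disk := hufc.integrableOn_compact disk_compact
  have hIu : IntegrableOn u Disk := (hu.continuous.continuousOn).integrableOn_compact disk_compact
  -- conclude
  have heq : ∀ z ∈ Disk, A' z = A z + (u (f.toFun z) - u z) := by
    intro z hz
    have h1 := hconst z hz
    rw [hc0] at h1
    simp only [hg_def] at h1
    linarith
  calc ∫ z in Disk, A z
      = (∫ z in Disk, A z) + ((∫ z in Disk, u (f.toFun z)) - ∫ z in Disk, u z) := by
        rw [hufD]; ring
    _ = ∫ z in Disk, (A z + (u (f.toFun z) - u z)) := by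
        have h := integral_add hIA (hIuf.sub hIu)
        have hsub := integral_sub hIuf hIu
        simp only [Pi.sub_apply] at h
        rw [h, hsub]
    _ = ∫ z in Disk, A' z := by
        apply setIntegral_congr_fun disk_meas
        intro z hz
        exact (heq z hz).symm
end
end

section
/- The set {(x,y) ∈ D × D : x ≠ y} is path-connected, and for every real δ with 0 < δ ≤ 2 the set {(x,y) ∈ D × D : ‖x − y‖ ≥ δ} is path-connected. -/
open MeasureTheory Metric Set Filter Topology
open scoped Real

noncomputable section

private lemma mem_Disk {z : ℂ} : z ∈ Disk ↔ ‖z‖ ≤ 1 := by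
  simp [Disk, mem_closedBall_zero_iff]

private lemma joined_key {δ : ℝ} (hδ : 0 < δ) (hδ2 : δ ≤ 2) {x y : ℂ}
    (hx : x ∈ Disk) (hy : y ∈ Disk) (hxy : δ ≤ ‖x - y‖) :
    JoinedIn {p : ℂ × ℂ | p.1 ∈ Disk ∧ p.2 ∈ Disk ∧ δ ≤ ‖p.1 - p.2‖} (x, y) (1, -1) := by
  rw [mem_Disk] at hx hy
  set S : Set (ℂ × ℂ) := {p : ℂ × ℂ | p.1 ∈ Disk ∧ p.2 ∈ Disk ∧ δ ≤ ‖p.1 - p.2‖} with hS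
  set v : ℂ := (2⁻¹ : ℝ) • (x - y) with hv
  set m : ℂ := (2⁻¹ : ℝ) • (x + y) with hm
  have hvnorm : ‖v‖ = ‖x - y‖ / 2 := by
    rw [hv, norm_smul]; simp [Real.norm_eq_abs]; ring
  have hv2 : δ / 2 ≤ ‖v‖ := by rw [hvnorm]; linarith
  have hv1 : ‖v‖ ≤ 1 := by
    rw [hvnorm]
    have := norm_sub_le x y
    linarith
  have hvpos : 0 < ‖v‖ := by linarith
  have hvne : v ≠ 0 := norm_pos_iff.mp hvpos
  set u : ℂ := (‖v‖⁻¹ : ℝ) • v with hu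
  have hunorm : ‖u‖ = 1 := by
    rw [hu, norm_smul, Real.norm_eq_abs, abs_of_pos (by positivity),
      inv_mul_cancel₀ hvpos.ne']
  have hune : u ≠ 0 := by
    intro h; rw [h] at hunorm; simp at hunorm
  -- Segment 1 : (x,y) to (v,-v)
  have J1 : JoinedIn S (x, y) (v, -v) := by
    refine ⟨⟨⟨fun t => (x - (t : ℝ) • m, y - (t : ℝ) • m), by fun_prop⟩, ?_, ?_⟩, ?_⟩
    · simp
    · simp only [Path.coe_mk_mk, Set.Icc.coe_one, one_smul, Prod.mk.injEq]
      constructor <;> (rw [hm, hv]; module)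
    · rintro ⟨t, ht0, ht1⟩
      simp only [Path.coe_mk_mk, hS, mem_setOf_eq, mem_Disk]
      refine ⟨?_, ?_, ?_⟩
      · have e : x - t • m = ((1 - t/2 : ℝ)) • x + ((-(t/2) : ℝ)) • y := by
          rw [hm]; module
        rw [e]
        calc ‖((1 - t/2 : ℝ)) • x + ((-(t/2) : ℝ)) • y‖
            ≤ ‖((1 - t/2 : ℝ)) • x‖ + ‖((-(t/2) : ℝ)) • y‖ := norm_add_le _ _
          _ ≤ 1 := by
              rw [norm_smul, norm_smul, Real.norm_eq_abs, Real.norm_eq_abs,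
                abs_of_nonneg (by linarith : (0:ℝ) ≤ 1 - t/2), abs_neg,
                abs_of_nonneg (by linarith : (0:ℝ) ≤ t/2)]
              nlinarith [norm_nonneg x, norm_nonneg y]
      · have e : y - t • m = ((-(t/2) : ℝ)) • x + ((1 - t/2 : ℝ)) • y := by
          rw [hm]; module
        rw [e]
        calc ‖((-(t/2) : ℝ)) • x + ((1 - t/2 : ℝ)) • y‖
            ≤ ‖((-(t/2) : ℝ)) • x‖ + ‖((1 - t/2 : ℝ)) • y‖ := norm_add_le _ _
          _ ≤ 1 := by
              rw [norm_smul, norm_smul, Real.norm_eq_abs, Real.norm_eq_abs, abs_neg,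
                abs_of_nonneg (by linarith : (0:ℝ) ≤ t/2),
                abs_of_nonneg (by linarith : (0:ℝ) ≤ 1 - t/2)]
              nlinarith [norm_nonneg x, norm_nonneg y]
      · have e : (x - t • m) - (y - t • m) = x - y := by abel
        rw [e]; exact hxy
  -- Segment 2 : (v,-v) to (u,-u)
  have J2 : JoinedIn S (v, -v) (u, -u) := by
    refine ⟨⟨⟨fun t => ((((1 - t) + t * ‖v‖⁻¹ : ℝ)) • v, -((((1 - t) + t * ‖v‖⁻¹ : ℝ)) • v)), by fun_prop⟩, ?_, ?_⟩, ?_⟩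
    · simp
    · simp [hu]
    · rintro ⟨t, ht0, ht1⟩
      simp only [Path.coe_mk_mk, hS, mem_setOf_eq, mem_Disk]
      have hs0 : (0 : ℝ) ≤ (1 - t) + t * ‖v‖⁻¹ := by
        have h := inv_nonneg.2 hvpos.le
        nlinarith
      have hsv : ((1 - t) + t * ‖v‖⁻¹) * ‖v‖ = (1 - t) * ‖v‖ + t := by
        rw [add_mul, mul_assoc, inv_mul_cancel₀ hvpos.ne', mul_one]
      have hns : ‖(((1 - t) + t * ‖v‖⁻¹ : ℝ)) • v‖ = (1 - t) * ‖v‖ + t := by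
        rw [norm_smul, Real.norm_eq_abs, abs_of_nonneg hs0, hsv]
      refine ⟨?_, ?_, ?_⟩
      · rw [hns]; nlinarith
      · rw [norm_neg, hns]; nlinarith
      · have e : (((1 - t) + t * ‖v‖⁻¹ : ℝ)) • v - -((((1 - t) + t * ‖v‖⁻¹ : ℝ)) • v)
            = ((2 * ((1 - t) + t * ‖v‖⁻¹) : ℝ)) • v := by module
        rw [e, norm_smul, Real.norm_eq_abs, abs_of_nonneg (by linarith), mul_assoc, hsv]
        nlinarith
  -- Segment 3 : (u,-u) to (1,-1)
  have J3 : JoinedIn S (u, -u) (1, -1) := by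
    refine ⟨⟨⟨fun t => (Complex.exp (((1 - (t : ℝ) : ℝ) : ℂ) * Complex.log u),
        -Complex.exp (((1 - (t : ℝ) : ℝ) : ℂ) * Complex.log u)), by fun_prop⟩, ?_, ?_⟩, ?_⟩
    · simp [Complex.exp_log hune]
    · simp
    · rintro ⟨t, ht0, ht1⟩
      simp only [Path.coe_mk_mk, hS, mem_setOf_eq, mem_Disk]
      have hre : ((((1 - t : ℝ) : ℂ)) * Complex.log u).re = 0 := by
        have : (Complex.log u).re = 0 := by
          rw [Complex.log_re, hunorm, Real.log_one]
        simp [Complex.mul_re, this]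
      have hne : ‖Complex.exp (((1 - t : ℝ) : ℂ) * Complex.log u)‖ = 1 := by
        rw [Complex.norm_exp, hre, Real.exp_zero]
      refine ⟨le_of_eq hne, by rw [norm_neg]; exact le_of_eq hne, ?_⟩
      have e : ∀ z : ℂ, z - -z = (2 : ℝ) • z := by intro z; module
      rw [e, norm_smul, Real.norm_eq_abs, hne]
      simp
      linarith
  exact J1.trans (J2.trans J3)

private lemma base_mem {δ : ℝ} (hδ2 : δ ≤ 2) :
    ((1 : ℂ), (-1 : ℂ)) ∈ {p : ℂ × ℂ | p.1 ∈ Disk ∧ p.2 ∈ Disk ∧ δ ≤ ‖p.1 - p.2‖} := by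
  refine ⟨mem_Disk.mpr (by norm_num), mem_Disk.mpr (by norm_num), ?_⟩
  have e : (1 : ℂ) - (-1) = 2 := by ring
  rw [e]
  simpa using hδ2


/-- The complement of the diagonal in `D × D` is path-connected, and so
is the set of pairs of points of `D` at distance at least `δ`, for every `0 < δ ≤ 2`. -/
theorem offdiag_pathConnected :
    IsPathConnected {p : ℂ × ℂ | p.1 ∈ Disk ∧ p.2 ∈ Disk ∧ p.1 ≠ p.2} ∧
      ∀ δ : ℝ, 0 < δ → δ ≤ 2 →
        IsPathConnected {p : ℂ × ℂ | p.1 ∈ Disk ∧ p.2 ∈ Disk ∧ δ ≤ ‖p.1 - p.2‖} := by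
  constructor
  · refine ⟨((1 : ℂ), (-1 : ℂ)), ⟨mem_Disk.mpr (by norm_num), mem_Disk.mpr (by norm_num),
      by norm_num⟩, ?_⟩
    rintro ⟨a, b⟩ ⟨ha, hb, hab⟩
    have hδ : 0 < ‖a - b‖ := by
      rw [norm_pos_iff]
      exact sub_ne_zero.mpr hab
    have hδ2 : ‖a - b‖ ≤ 2 := by
      have h1 := norm_sub_le a b
      rw [mem_Disk] at ha hb
      linarith
    have key := joined_key hδ hδ2 ha hb le_rfl
    have hsub : {p : ℂ × ℂ | p.1 ∈ Disk ∧ p.2 ∈ Disk ∧ ‖a - b‖ ≤ ‖p.1 - p.2‖}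
        ⊆ {p : ℂ × ℂ | p.1 ∈ Disk ∧ p.2 ∈ Disk ∧ p.1 ≠ p.2} := by
      rintro q ⟨h1, h2, h3⟩
      refine ⟨h1, h2, ?_⟩
      intro h
      rw [h, sub_self, norm_zero] at h3
      linarith
    exact ((key.mono hsub).symm)
  · intro δ h1 h2
    refine ⟨((1 : ℂ), (-1 : ℂ)), base_mem h2, ?_⟩
    rintro ⟨a, b⟩ ⟨ha, hb, hab⟩
    exact (joined_key h1 h2 ha hb hab).symm
end
end
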